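/- Let F* be a fixed graph with two distinguished non-adjacent vertices a_1, a_2, and let W ⊆ [n]. In the binomial random graph G(n,p) with (log n)/n ≤ p < 1, with probability at least 1 - exp(-(n log n)/(2 e(F*))) there exists a set E_0 of at most n·log n edges of G(n,p) such that the graph obtained by deleting E_0 contains at most 2 p^{e(F*)} n^{v(F*)-2} |W|² copies φ(F*) of F* satisfying V(φ(F*)) ∩ W = {φ(a_1), φ(a_2)}. -/

import Mathlib

open scoped Classical

/-- The edge set of the complete graph on `[n] = Fin n`. -/
noncomputable def edgeUniv (n : ℕ) : Finset (Sym2 (Fin n)) :=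
  Finset.univ.filter (fun e => ¬ e.IsDiag)

/-- The probability, in the binomial random graph `G(n,p)` (modelled as a random subset `G` of
the edges of `Kₙ`, each edge present independently with probability `p`), of an event `A`. -/
noncomputable def gnpProb (n : ℕ) (p : ℝ) (A : Finset (Sym2 (Fin n)) → Prop) : ℝ :=
  ∑ G ∈ (edgeUniv n).powerset,
    if A G then p ^ G.card * (1 - p) ^ ((edgeUniv n).card - G.card) else 0

private lemma sum_w {α : Type*} [DecidableEq α] (p : ℝ) (S : Finset α) :
    ∑ G ∈ S.powerset, p ^ G.card * (1 - p) ^ (S.card - G.card) = 1 := by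
  have h := Finset.prod_add (fun _ : α => p) (fun _ => (1:ℝ) - p) S
  simp only [Finset.prod_const, add_sub_cancel, one_pow] at h
  refine Eq.trans (Finset.sum_congr rfl fun t ht => ?_) h.symm
  rw [Finset.card_sdiff_of_subset (Finset.mem_powerset.1 ht)]

private lemma prob_superset {α : Type*} [DecidableEq α] (p : ℝ) (S A : Finset α) (hA : A ⊆ S) :
    ∑ G ∈ S.powerset.filter (fun G => A ⊆ G),
      p ^ G.card * (1 - p) ^ (S.card - G.card) = p ^ A.card := by
  have key : ∑ G ∈ S.powerset.filter (fun G => A ⊆ G),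
      p ^ G.card * (1 - p) ^ (S.card - G.card)
      = ∑ H ∈ (S \ A).powerset,
        p ^ A.card * (p ^ H.card * (1 - p) ^ ((S \ A).card - H.card)) := by
    refine Finset.sum_nbij' (fun G => G \ A) (fun H => H ∪ A) ?_ ?_ ?_ ?_ ?_
    · intro G hG
      simp only [Finset.mem_filter, Finset.mem_powerset] at hG
      exact Finset.mem_powerset.2 (Finset.sdiff_subset_sdiff hG.1 le_rfl)
    · intro H hH
      simp only [Finset.mem_powerset] at hH
      simp only [Finset.mem_filter, Finset.mem_powerset]
      exact ⟨Finset.union_subset (hH.trans Finset.sdiff_subset) hA,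
        Finset.subset_union_right⟩
    · intro G hG
      simp only [Finset.mem_filter, Finset.mem_powerset] at hG
      exact Finset.sdiff_union_of_subset hG.2
    · intro H hH
      simp only [Finset.mem_powerset] at hH
      have hd : Disjoint H A := Finset.disjoint_of_subset_left hH Finset.sdiff_disjoint
      rw [Finset.union_sdiff_cancel_right hd]
    · intro G hG
      simp only [Finset.mem_filter, Finset.mem_powerset] at hG
      have hAG : A.card ≤ G.card := Finset.card_le_card hG.2
      have hGS : G.card ≤ S.card := Finset.card_le_card hG.1
      have hc1 : (G \ A).card = G.card - A.card := Finset.card_sdiff_of_subset hG.2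
      have hc2 : (S \ A).card = S.card - A.card := Finset.card_sdiff_of_subset hA
      simp only [hc1, hc2]
      have e1 : S.card - A.card - (G.card - A.card) = S.card - G.card := by omega
      have e2 : A.card + (G.card - A.card) = G.card := by omega
      rw [e1, ← mul_assoc, ← pow_add, e2]
  rw [key, ← Finset.mul_sum, sum_w, mul_one]

private noncomputable def Tups {V : Type*} [Fintype V] {n : ℕ} (Φ : Finset (V → Fin n))
    (Ed : (V → Fin n) → Finset (Sym2 (Fin n))) (G : Finset (Sym2 (Fin n))) (m : ℕ) :
    Finset (Fin m → (V → Fin n)) :=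
  Finset.univ.filter (fun t => (∀ i, t i ∈ Φ) ∧ (∀ i, Ed (t i) ⊆ G) ∧
    ∀ i j, i ≠ j → Disjoint (Ed (t i)) (Ed (t j)))

private lemma mem_Tups {V : Type*} [Fintype V] {n : ℕ} {Φ : Finset (V → Fin n)}
    {Ed : (V → Fin n) → Finset (Sym2 (Fin n))} {G : Finset (Sym2 (Fin n))} {m : ℕ}
    {t : Fin m → (V → Fin n)} :
    t ∈ Tups Φ Ed G m ↔ (∀ i, t i ∈ Φ) ∧ (∀ i, Ed (t i) ⊆ G) ∧
      ∀ i j, i ≠ j → Disjoint (Ed (t i)) (Ed (t j)) := by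
  simp [Tups]

private lemma greedy {V : Type*} [Fintype V] {n : ℕ} (Φ : Finset (V → Fin n))
    (Ed : (V → Fin n) → Finset (Sym2 (Fin n))) (s : ℕ)
    (hEcard : ∀ φ ∈ Φ, (Ed φ).card = s)
    (μ k : ℝ) (hμ : 0 ≤ μ) (G : Finset (Sym2 (Fin n)))
    (hBad : ∀ E0 ⊆ G, (E0.card : ℝ) ≤ k →
      2*μ < ((Φ.filter (fun φ => Ed φ ⊆ G \ E0)).card : ℝ)) :
    ∀ m : ℕ, (∀ i : ℕ, i < m → (i:ℝ) * s ≤ k) →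
      (2*μ)^m ≤ ((Tups Φ Ed G m).card : ℝ) := by
  intro m
  induction m with
  | zero =>
    intro _
    have : (Tups Φ Ed G 0).card = 1 := by
      rw [show (Tups Φ Ed G 0) = Finset.univ by
        ext t
        simp only [mem_Tups, Finset.mem_univ, iff_true]
        exact ⟨fun i => i.elim0, fun i => i.elim0, fun i => i.elim0⟩]
      simp
    rw [this]; norm_num
  | succ m ih =>
    intro hm
    have IH := ih (fun i hi => hm i (Nat.lt_succ_of_lt hi))
    set E0 : (Fin m → (V → Fin n)) → Finset (Sym2 (Fin n)) :=
      fun t => Finset.univ.biUnion (fun i => Ed (t i)) with hE0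
    set C : (Fin m → (V → Fin n)) → Finset (V → Fin n) :=
      fun t => Φ.filter (fun φ => Ed φ ⊆ G \ E0 t) with hC
    have hCbig : ∀ t ∈ Tups Φ Ed G m, 2*μ ≤ ((C t).card : ℝ) := by
      intro t ht
      rw [mem_Tups] at ht
      have hsub : E0 t ⊆ G := Finset.biUnion_subset.2 (fun i _ => ht.2.1 i)
      have hcard : ((E0 t).card : ℝ) ≤ k := by
        have h1 : (E0 t).card ≤ ∑ i : Fin m, (Ed (t i)).card := Finset.card_biUnion_le
        have h2 : ∑ i : Fin m, (Ed (t i)).card = m * s := by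
          rw [Finset.sum_congr rfl (fun i _ => hEcard _ (ht.1 i))]
          simp [Finset.sum_const, mul_comm]
        calc ((E0 t).card : ℝ) ≤ ((m * s : ℕ) : ℝ) := by exact_mod_cast h2 ▸ h1
          _ = (m : ℝ) * s := by push_cast; ring
          _ ≤ k := hm m (Nat.lt_succ_self m)
      exact (hBad (E0 t) hsub hcard).le
    have hmaps : ∀ q ∈ (Tups Φ Ed G m).sigma C,
        (Fin.snoc q.1 q.2 : Fin (m+1) → (V → Fin n)) ∈ Tups Φ Ed G (m+1) := by
      rintro ⟨t, φ⟩ hq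
      rw [Finset.mem_sigma] at hq
      obtain ⟨ht, hφ⟩ := hq
      rw [mem_Tups] at ht
      rw [hC] at hφ
      simp only [Finset.mem_filter] at hφ
      obtain ⟨hφΦ, hφsub⟩ := hφ
      have hdisj : ∀ i : Fin m, Disjoint (Ed (t i)) (Ed φ) := by
        intro i
        have h1 : Ed (t i) ⊆ E0 t := Finset.subset_biUnion_of_mem (fun j => Ed (t j))
          (Finset.mem_univ i)
        exact Finset.disjoint_left.2 fun e he1 he2 =>
          (Finset.mem_sdiff.1 (hφsub he2)).2 (h1 he1)
      rw [mem_Tups]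
      refine ⟨?_, ?_, ?_⟩
      · intro i
        rcases Fin.eq_castSucc_or_eq_last i with ⟨i', rfl⟩ | rfl
        · rw [Fin.snoc_castSucc]; exact ht.1 i'
        · rw [Fin.snoc_last]; exact hφΦ
      · intro i
        rcases Fin.eq_castSucc_or_eq_last i with ⟨i', rfl⟩ | rfl
        · rw [Fin.snoc_castSucc]; exact ht.2.1 i'
        · rw [Fin.snoc_last]; exact hφsub.trans Finset.sdiff_subset
      · intro i j hij
        rcases Fin.eq_castSucc_or_eq_last i with ⟨i', rfl⟩ | rfl <;>
          rcases Fin.eq_castSucc_or_eq_last j with ⟨j', rfl⟩ | rfl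
        · rw [Fin.snoc_castSucc, Fin.snoc_castSucc]
          exact ht.2.2 i' j' (fun h => hij (by rw [h]))
        · rw [Fin.snoc_castSucc, Fin.snoc_last]; exact hdisj i'
        · rw [Fin.snoc_last, Fin.snoc_castSucc]; exact (hdisj j').symm
        · exact absurd rfl hij
    have hinj : Set.InjOn (fun q : (_ : Fin m → (V → Fin n)) × (V → Fin n) =>
        (Fin.snoc q.1 q.2 : Fin (m+1) → (V → Fin n))) ((Tups Φ Ed G m).sigma C) := by
      rintro ⟨t1, φ1⟩ _ ⟨t2, φ2⟩ _ heq
      simp only at heq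
      have h1 : t1 = t2 := by
        funext i
        have := congrFun heq (Fin.castSucc i)
        rwa [Fin.snoc_castSucc, Fin.snoc_castSucc] at this
      have h2 : φ1 = φ2 := by
        have := congrFun heq (Fin.last m)
        rwa [Fin.snoc_last, Fin.snoc_last] at this
      subst h1; subst h2; rfl
    have hcardle : ((Tups Φ Ed G m).sigma C).card ≤ (Tups Φ Ed G (m+1)).card :=
      Finset.card_le_card_of_injOn _ hmaps hinj
    calc (2*μ)^(m+1) = (2*μ)^m * (2*μ) := pow_succ _ _
      _ ≤ ((Tups Φ Ed G m).card : ℝ) * (2*μ) := by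
          apply mul_le_mul_of_nonneg_right IH
          linarith
      _ = ∑ _t ∈ Tups Φ Ed G m, 2*μ := by rw [Finset.sum_const, nsmul_eq_mul, mul_comm]
      _ ≤ ∑ t ∈ Tups Φ Ed G m, ((C t).card : ℝ) := Finset.sum_le_sum hCbig
      _ = (((Tups Φ Ed G m).sigma C).card : ℝ) := by
          rw [Finset.card_sigma]; push_cast; rfl
      _ ≤ ((Tups Φ Ed G (m+1)).card : ℝ) := by exact_mod_cast hcardle

private lemma expectation {V : Type*} [Fintype V] {n : ℕ} (p : ℝ) (hp0 : 0 ≤ p)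
    (Φ : Finset (V → Fin n)) (Ed : (V → Fin n) → Finset (Sym2 (Fin n))) (s : ℕ)
    (hEcard : ∀ φ ∈ Φ, (Ed φ).card = s)
    (hEsub : ∀ φ ∈ Φ, Ed φ ⊆ edgeUniv n) (r : ℕ) :
    ∑ G ∈ (edgeUniv n).powerset,
      (p ^ G.card * (1-p) ^ ((edgeUniv n).card - G.card)) * ((Tups Φ Ed G r).card : ℝ)
      ≤ ((Φ.card : ℝ) * p ^ s) ^ r := by
  set D : Finset (Fin r → (V → Fin n)) := Finset.univ.filter
    (fun t => (∀ i, t i ∈ Φ) ∧ ∀ i j, i ≠ j → Disjoint (Ed (t i)) (Ed (t j))) with hD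
  set U : (Fin r → (V → Fin n)) → Finset (Sym2 (Fin n)) :=
    fun t => Finset.univ.biUnion (fun i => Ed (t i)) with hU
  have hTcard : ∀ G, ((Tups Φ Ed G r).card : ℝ)
      = ∑ t ∈ D, (if U t ⊆ G then (1:ℝ) else 0) := by
    intro G
    have : Tups Φ Ed G r = D.filter (fun t => U t ⊆ G) := by
      ext t
      simp only [mem_Tups, hD, Finset.mem_filter, Finset.mem_univ, true_and, hU,
        Finset.biUnion_subset]
      constructor
      · rintro ⟨h1, h2, h3⟩; exact ⟨⟨h1, h3⟩, fun i _ => h2 i⟩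
      · rintro ⟨⟨h1, h3⟩, h2⟩; exact ⟨h1, fun i => h2 i trivial, h3⟩
    rw [this]
    rw [Finset.card_filter]
    push_cast
    exact Finset.sum_congr rfl (fun t _ => by split <;> norm_num)
  have swap : ∑ G ∈ (edgeUniv n).powerset,
      (p ^ G.card * (1-p) ^ ((edgeUniv n).card - G.card)) * ((Tups Φ Ed G r).card : ℝ)
      = ∑ t ∈ D, ∑ G ∈ (edgeUniv n).powerset.filter (fun G => U t ⊆ G),
          p ^ G.card * (1-p) ^ ((edgeUniv n).card - G.card) := by
    simp_rw [hTcard, Finset.mul_sum]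
    rw [Finset.sum_comm]
    refine Finset.sum_congr rfl fun t _ => ?_
    rw [Finset.sum_filter]
    refine Finset.sum_congr rfl fun G _ => ?_
    split <;> simp
  rw [swap]
  have hterm : ∀ t ∈ D, ∑ G ∈ (edgeUniv n).powerset.filter (fun G => U t ⊆ G),
      p ^ G.card * (1-p) ^ ((edgeUniv n).card - G.card) = p ^ (r * s) := by
    intro t ht
    rw [hD, Finset.mem_filter] at ht
    obtain ⟨-, h1, h2⟩ := ht
    have hsub : U t ⊆ edgeUniv n := Finset.biUnion_subset.2 (fun i _ => hEsub _ (h1 i))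
    rw [prob_superset p (edgeUniv n) (U t) hsub]
    congr 1
    rw [hU]
    rw [Finset.card_biUnion (fun i _ j _ hij => h2 i j hij)]
    rw [Finset.sum_congr rfl (fun i _ => hEcard _ (h1 i))]
    simp [Finset.sum_const, mul_comm]
  rw [Finset.sum_congr rfl hterm, Finset.sum_const, nsmul_eq_mul]
  have hDcard : D.card ≤ Φ.card ^ r := by
    have : D ⊆ Fintype.piFinset (fun _ : Fin r => Φ) := by
      intro t ht
      rw [hD, Finset.mem_filter] at ht
      exact Fintype.mem_piFinset.2 ht.2.1
    calc D.card ≤ (Fintype.piFinset (fun _ : Fin r => Φ)).card := Finset.card_le_card this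
      _ = Φ.card ^ r := by rw [Fintype.card_piFinset]; simp
  calc (D.card : ℝ) * p ^ (r * s) ≤ ((Φ.card : ℝ) ^ r) * p ^ (r * s) := by
        apply mul_le_mul_of_nonneg_right _ (by positivity)
        exact_mod_cast hDcard
    _ = ((Φ.card : ℝ) * p ^ s) ^ r := by rw [mul_pow, ← pow_mul, mul_comm r s]

private lemma bad_prob {V : Type*} [Fintype V] {n : ℕ} (p : ℝ) (hp0 : 0 ≤ p) (hp1 : p ≤ 1)
    (Φ : Finset (V → Fin n)) (Ed : (V → Fin n) → Finset (Sym2 (Fin n))) (s : ℕ)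
    (hEcard : ∀ φ ∈ Φ, (Ed φ).card = s) (hEsub : ∀ φ ∈ Φ, Ed φ ⊆ edgeUniv n)
    (μ k : ℝ) (hμ : 0 < μ) (hΦμ : (Φ.card : ℝ) * p ^ s ≤ μ)
    (r : ℕ) (hrs : ∀ i : ℕ, i < r → (i:ℝ) * s ≤ k) :
    ∑ G ∈ (edgeUniv n).powerset.filter (fun G => ∀ E0 ⊆ G, (E0.card:ℝ) ≤ k →
        2*μ < ((Φ.filter (fun φ => Ed φ ⊆ G \ E0)).card : ℝ)),
      p ^ G.card * (1-p)^((edgeUniv n).card - G.card) ≤ (1/2)^r := by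
  set w : Finset (Sym2 (Fin n)) → ℝ :=
    fun G => p ^ G.card * (1-p)^((edgeUniv n).card - G.card) with hw
  have hwnn : ∀ G, 0 ≤ w G := fun G =>
    mul_nonneg (pow_nonneg hp0 _) (pow_nonneg (by linarith) _)
  set Bad := (edgeUniv n).powerset.filter (fun G => ∀ E0 ⊆ G, (E0.card:ℝ) ≤ k →
        2*μ < ((Φ.filter (fun φ => Ed φ ⊆ G \ E0)).card : ℝ)) with hBadDef
  have step1 : (∑ G ∈ Bad, w G) * (2*μ)^r ≤
      ∑ G ∈ Bad, w G * ((Tups Φ Ed G r).card : ℝ) := by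
    rw [Finset.sum_mul]
    refine Finset.sum_le_sum fun G hG => ?_
    rw [hBadDef, Finset.mem_filter] at hG
    exact mul_le_mul_of_nonneg_left (greedy Φ Ed s hEcard μ k hμ.le G hG.2 r hrs) (hwnn G)
  have step2 : ∑ G ∈ Bad, w G * ((Tups Φ Ed G r).card : ℝ) ≤
      ∑ G ∈ (edgeUniv n).powerset, w G * ((Tups Φ Ed G r).card : ℝ) :=
    Finset.sum_le_sum_of_subset_of_nonneg (Finset.filter_subset _ _)
      (fun G _ _ => mul_nonneg (hwnn G) (Nat.cast_nonneg _))
  have step3 := expectation p hp0 Φ Ed s hEcard hEsub r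
  have step4 : ((Φ.card:ℝ) * p^s)^r ≤ μ^r :=
    pow_le_pow_left₀ (mul_nonneg (Nat.cast_nonneg _) (pow_nonneg hp0 _)) hΦμ r
  have key : (∑ G ∈ Bad, w G) * (2*μ)^r ≤ μ^r :=
    le_trans step1 (le_trans step2 (le_trans step3 step4))
  have h2μ : (0:ℝ) < (2*μ)^r := by positivity
  rw [← le_div_iff₀ h2μ] at key
  have hμr : (μ:ℝ)^r ≠ 0 := by positivity
  calc ∑ G ∈ Bad, w G ≤ μ^r / (2*μ)^r := key
    _ = (1/2)^r := by
        rw [mul_pow, mul_comm ((2:ℝ)^r), ← div_div, div_self hμr, one_div, one_div, inv_pow]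

private lemma gnp_split (n : ℕ) (p : ℝ) (A : Finset (Sym2 (Fin n)) → Prop) :
    gnpProb n p A = 1 - ∑ G ∈ (edgeUniv n).powerset.filter (fun G => ¬ A G),
      p ^ G.card * (1 - p) ^ ((edgeUniv n).card - G.card) := by
  have h2 := Finset.sum_filter_add_sum_filter_not ((edgeUniv n).powerset) A
    (fun G => p ^ G.card * (1 - p) ^ ((edgeUniv n).card - G.card))
  rw [sum_w] at h2
  rw [gnpProb, Finset.sum_ite, Finset.sum_const_zero, add_zero]
  linarith

private lemma gnp_true (n : ℕ) (p : ℝ) (A : Finset (Sym2 (Fin n)) → Prop)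
    (h : ∀ G ∈ (edgeUniv n).powerset, A G) : gnpProb n p A = 1 := by
  rw [gnp_split]
  have : (edgeUniv n).powerset.filter (fun G => ¬ A G) = ∅ := by
    rw [Finset.filter_eq_empty_iff]; exact fun G hG => not_not_intro (h G hG)
  rw [this, Finset.sum_empty, sub_zero]

private lemma gnp_nonneg (n : ℕ) (p : ℝ) (hp0 : 0 ≤ p) (hp1 : p ≤ 1)
    (A : Finset (Sym2 (Fin n)) → Prop) : 0 ≤ gnpProb n p A := by
  refine Finset.sum_nonneg fun G _ => ?_
  split
  · exact mul_nonneg (pow_nonneg hp0 _) (pow_nonneg (by linarith) _)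
  · exact le_refl 0

section GraphLemmas
variable {VF : Type*} [Fintype VF] (F : SimpleGraph VF) {n : ℕ}

private lemma edge_iff (φ : VF → Fin n) (X : Finset (Sym2 (Fin n))) :
    (∀ a b, F.Adj a b → s(φ a, φ b) ∈ X) ↔ F.edgeFinset.image (Sym2.map φ) ⊆ X := by
  constructor
  · intro h e he
    obtain ⟨e', he', rfl⟩ := Finset.mem_image.1 he
    induction e' using Sym2.ind with
    | _ a b =>
      rw [Sym2.map_pair_eq]
      exact h a b (F.mem_edgeSet.1 (SimpleGraph.mem_edgeFinset.1 he'))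
  · intro h a b hab
    exact h (Finset.mem_image_of_mem _ (SimpleGraph.mem_edgeFinset.2 (F.mem_edgeSet.2 hab)))

private lemma bridge (a1 a2 : VF) (W : Finset (Fin n)) (G E0 : Finset (Sym2 (Fin n))) :
    ({φ : VF → Fin n | Function.Injective φ ∧
        (∀ a b, F.Adj a b → s(φ a, φ b) ∈ G \ E0) ∧
        Set.range φ ∩ ↑W = {φ a1, φ a2}}.ncard)
    = (((Finset.univ.filter (fun φ : VF → Fin n =>
          Function.Injective φ ∧ Set.range φ ∩ ↑W = {φ a1, φ a2})).filter
        (fun φ => F.edgeFinset.image (Sym2.map φ) ⊆ G \ E0)).card) := by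
  rw [← Set.ncard_coe_finset]
  congr 1
  ext φ
  simp only [Finset.coe_filter, Finset.mem_filter, Finset.mem_univ, true_and,
    Set.mem_setOf_eq, edge_iff]
  tauto

private lemma Ed_card (s : ℕ) (hs : F.edgeSet.ncard = s) (φ : VF → Fin n)
    (hφ : Function.Injective φ) : (F.edgeFinset.image (Sym2.map φ)).card = s := by
  rw [Finset.card_image_of_injective _ (Sym2.map.injective hφ), ← hs,
    Set.ncard_eq_toFinset_card']
  congr 1

private lemma Ed_sub (φ : VF → Fin n) (hφ : Function.Injective φ) :
    F.edgeFinset.image (Sym2.map φ) ⊆ edgeUniv n := by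
  intro e he
  obtain ⟨e', he', rfl⟩ := Finset.mem_image.1 he
  induction e' using Sym2.ind with
  | _ a b =>
    have hab : F.Adj a b := F.mem_edgeSet.1 (SimpleGraph.mem_edgeFinset.1 he')
    rw [edgeUniv, Finset.mem_filter]
    refine ⟨Finset.mem_univ _, ?_⟩
    rw [Sym2.map_pair_eq, Sym2.mk_isDiag_iff]
    exact fun h => hab.ne (hφ h)

private lemma Phi_card (a1 a2 : VF) (ha : a1 ≠ a2) (W : Finset (Fin n)) :
    ((Finset.univ.filter (fun φ : VF → Fin n =>
        Function.Injective φ ∧ Set.range φ ∩ ↑W = {φ a1, φ a2})).card : ℝ)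
      ≤ (n : ℝ) ^ (Fintype.card VF - 2) * (W.card : ℝ) ^ 2 := by
  classical
  set K := {x : VF // x ∉ ({a1, a2} : Finset VF)}
  have hKcard : Fintype.card (K → Fin n) = n ^ (Fintype.card VF - 2) := by
    rw [Fintype.card_fun, Fintype.card_fin]
    congr 1
    have h2 : Fintype.card {x : VF // x ∈ ({a1, a2} : Finset VF)} = 2 := by
      rw [Fintype.card_coe]
      rw [Finset.card_insert_of_notMem (by simp [ha]), Finset.card_singleton]
    rw [Fintype.card_subtype_compl, h2]
  have hle : (Finset.univ.filter (fun φ : VF → Fin n =>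
      Function.Injective φ ∧ Set.range φ ∩ ↑W = {φ a1, φ a2})).card
      ≤ (W ×ˢ W ×ˢ (Finset.univ : Finset (K → Fin n))).card := by
    apply Finset.card_le_card_of_injOn
      (fun φ => (φ a1, φ a2, fun x : K => φ x.1))
    · intro φ hφ
      rw [Finset.mem_coe, Finset.mem_filter] at hφ
      obtain ⟨-, -, hr⟩ := hφ
      have h1 : φ a1 ∈ Set.range φ ∩ ↑W := by rw [hr]; exact Set.mem_insert _ _
      have h2 : φ a2 ∈ Set.range φ ∩ ↑W := by
        rw [hr]; exact Set.mem_insert_iff.2 (Or.inr rfl)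
      simp only [Finset.mem_coe, Finset.mem_product, Finset.mem_univ, and_true]
      exact ⟨h1.2, h2.2⟩
    · intro φ hφ ψ hψ heq
      simp only [Prod.mk.injEq] at heq
      funext x
      by_cases hx1 : x = a1
      · subst hx1; exact heq.1
      by_cases hx2 : x = a2
      · subst hx2; exact heq.2.1
      · have hx : x ∉ ({a1, a2} : Finset VF) := by simp [hx1, hx2]
        exact congrFun heq.2.2 ⟨x, hx⟩
  calc ((Finset.univ.filter (fun φ : VF → Fin n =>
      Function.Injective φ ∧ Set.range φ ∩ ↑W = {φ a1, φ a2})).card : ℝ)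
      ≤ ((W ×ˢ W ×ˢ (Finset.univ : Finset (K → Fin n))).card : ℝ) := by exact_mod_cast hle
    _ = (n : ℝ) ^ (Fintype.card VF - 2) * (W.card : ℝ) ^ 2 := by
        rw [Finset.card_product, Finset.card_product, Finset.card_univ, hKcard]
        push_cast
        ring

end GraphLemmas

/-- Deletion method: for a fixed graph `F⋆` with distinguished non-adjacent vertices `a₁ ≠ a₂`
and `W ⊆ [n]`, in `G(n,p)` with `(log n)/n ≤ p < 1`, with probability at least
`1 - exp(-(n log n)/(2 e(F⋆)))` one can delete a set `E₀` of at most `n log n` edges so that at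
most `2 p^{e(F⋆)} n^{v(F⋆)-2} |W|²` copies `φ(F⋆)` of `F⋆` with
`V(φ(F⋆)) ∩ W = {φ(a₁), φ(a₂)}` remain. -/
theorem stmt_10 {VF : Type*} [Fintype VF] (F : SimpleGraph VF)
    (a1 a2 : VF) (ha : a1 ≠ a2) (hna : ¬ F.Adj a1 a2)
    (n : ℕ) (W : Finset (Fin n)) (p : ℝ)
    (hp1 : Real.log n / n ≤ p) (hp2 : p < 1) :
    1 - Real.exp (-((n : ℝ) * Real.log n) / (2 * F.edgeSet.ncard)) ≤
      gnpProb n p (fun G =>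
        ∃ E0 ⊆ G, (E0.card : ℝ) ≤ n * Real.log n ∧
          ({φ : VF → Fin n | Function.Injective φ ∧
              (∀ a b, F.Adj a b → s(φ a, φ b) ∈ G \ E0) ∧
              Set.range φ ∩ ↑W = {φ a1, φ a2}}.ncard : ℝ) ≤
            2 * p ^ F.edgeSet.ncard * (n : ℝ) ^ (Fintype.card VF - 2) * (W.card : ℝ) ^ 2) := by
  have hlog : 0 ≤ Real.log n := Real.log_natCast_nonneg n
  have hp0 : 0 ≤ p := le_trans (div_nonneg hlog (Nat.cast_nonneg n)) hp1
  have hk0 : 0 ≤ (n:ℝ) * Real.log n := by positivity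
  by_cases hn2 : n < 2
  · have hln : Real.log n = 0 := by interval_cases n <;> simp
    rw [hln]
    simp only [mul_zero, neg_zero, zero_div, Real.exp_zero, sub_self]
    exact gnp_nonneg n p hp0 hp2.le _
  push_neg at hn2
  have hppos : 0 < p := by
    refine lt_of_lt_of_le ?_ hp1
    have h1 : (1:ℝ) < n := by exact_mod_cast Nat.lt_of_lt_of_le Nat.one_lt_two hn2
    exact div_pos (Real.log_pos h1) (by linarith)
  by_cases hW : W = ∅
  · rw [gnp_true]
    · have := Real.exp_pos (-((n : ℝ) * Real.log n) / (2 * F.edgeSet.ncard))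
      linarith
    · intro G _
      refine ⟨∅, Finset.empty_subset G, by simpa using hk0, ?_⟩
      have hempty : {φ : VF → Fin n | Function.Injective φ ∧
          (∀ a b, F.Adj a b → s(φ a, φ b) ∈ G \ ∅) ∧
          Set.range φ ∩ ↑W = {φ a1, φ a2}} = ∅ := by
        rw [Set.eq_empty_iff_forall_notMem]
        rintro φ ⟨-, -, hr⟩
        have : φ a1 ∈ Set.range φ ∩ ↑W := by rw [hr]; exact Set.mem_insert _ _
        rw [hW] at this
        simpa using this.2
      rw [hempty]
      simp only [Set.ncard_empty, Nat.cast_zero]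
      positivity
  -- main case
  have hWne : W.Nonempty := Finset.nonempty_of_ne_empty hW
  set s := F.edgeSet.ncard with hs
  set k := (n:ℝ) * Real.log n with hkdef
  set Φ := Finset.univ.filter (fun φ : VF → Fin n =>
    Function.Injective φ ∧ Set.range φ ∩ ↑W = {φ a1, φ a2}) with hΦ
  set Ed := fun φ : VF → Fin n => F.edgeFinset.image (Sym2.map φ) with hEd
  set μ := p ^ s * (n:ℝ)^(Fintype.card VF - 2) * (W.card:ℝ)^2 with hμdef
  set r := ⌊k / (s:ℝ)⌋₊ + 1 with hrdef
  have hEcard : ∀ φ ∈ Φ, (Ed φ).card = s := by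
    intro φ hφ
    rw [hΦ, Finset.mem_filter] at hφ
    exact Ed_card F s hs.symm φ hφ.2.1
  have hEsub : ∀ φ ∈ Φ, Ed φ ⊆ edgeUniv n := by
    intro φ hφ
    rw [hΦ, Finset.mem_filter] at hφ
    exact Ed_sub F φ hφ.2.1
  have hnpos : (0:ℝ) < n := by positivity
  have hμpos : 0 < μ := by
    have hWc : (0:ℝ) < W.card := by exact_mod_cast Finset.card_pos.2 hWne
    rw [hμdef]
    positivity
  have hΦμ : (Φ.card:ℝ) * p^s ≤ μ := by
    have hPC := Phi_card a1 a2 ha W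
    calc (Φ.card:ℝ) * p^s
        ≤ ((n : ℝ) ^ (Fintype.card VF - 2) * (W.card : ℝ) ^ 2) * p^s :=
          mul_le_mul_of_nonneg_right hPC (pow_nonneg hp0 s)
      _ = μ := by rw [hμdef]; ring
  have hrs : ∀ i : ℕ, i < r → (i:ℝ)*s ≤ k := by
    intro i hi
    rcases Nat.eq_zero_or_pos s with hs0 | hs0
    · rw [hs0]; simpa using hk0
    · have hi' : (i:ℝ) ≤ (⌊k/(s:ℝ)⌋₊ : ℝ) := by
        exact_mod_cast Nat.lt_succ_iff.1 hi
      have hfl : ((⌊k/(s:ℝ)⌋₊ : ℕ) : ℝ) ≤ k / s := Nat.floor_le (by positivity)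
      have hsr : (0:ℝ) < s := by exact_mod_cast hs0
      calc (i:ℝ)*s ≤ (k/s)*s :=
            mul_le_mul_of_nonneg_right (le_trans hi' hfl) hsr.le
        _ = k := div_mul_cancel₀ k hsr.ne'
  have hmain := bad_prob p hp0 hp2.le Φ Ed s hEcard hEsub μ k hμpos hΦμ r hrs
  have hfin : ((1:ℝ)/2)^r ≤ Real.exp (-k / (2 * (s:ℝ))) := by
    have hlog2 : (1:ℝ)/2 ≤ Real.log 2 := by
      have := Real.log_two_gt_d9; linarith
    have hrk : k / (2*(s:ℝ)) ≤ (r:ℝ) * Real.log 2 := by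
      rcases Nat.eq_zero_or_pos s with h0 | hs0
      · rw [h0]
        simp only [Nat.cast_zero, mul_zero, div_zero]
        positivity
      · have hsr : (0:ℝ) < s := by exact_mod_cast hs0
        have h1 : k / (s:ℝ) < r := by
          have h2 := Nat.lt_floor_add_one (k / (s:ℝ))
          rw [hrdef]; push_cast; linarith
        have heq : k / (2*(s:ℝ)) = (k/(s:ℝ))/2 := by
          rw [div_div, mul_comm]
        rw [heq]
        calc (k/(s:ℝ))/2 ≤ (r:ℝ)/2 := by linarith
          _ = (r:ℝ)*(1/2) := by ring
          _ ≤ (r:ℝ)*Real.log 2 := mul_le_mul_of_nonneg_left hlog2 (Nat.cast_nonneg r)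
    have h12 : ((1:ℝ)/2)^r = Real.exp ((r:ℝ) * Real.log ((1:ℝ)/2)) := by
      rw [Real.exp_nat_mul, Real.exp_log (by norm_num : (0:ℝ) < 1/2)]
    rw [h12, one_div, Real.log_inv]
    apply Real.exp_le_exp.2
    rw [neg_div]
    nlinarith [hrk]
  rw [gnp_split]
  refine sub_le_sub_left (le_trans (le_trans
    (Finset.sum_le_sum_of_subset_of_nonneg ?_
      (fun G _ _ => mul_nonneg (pow_nonneg hp0 _) (pow_nonneg (by linarith) _)))
    hmain) hfin) 1
  intro G hG
  simp only [Finset.mem_filter] at hG ⊢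
  refine ⟨hG.1, ?_⟩
  have hG2 : ¬ (∃ E0 ⊆ G, (E0.card : ℝ) ≤ k ∧
      ({φ : VF → Fin n | Function.Injective φ ∧
          (∀ a b, F.Adj a b → s(φ a, φ b) ∈ G \ E0) ∧
          Set.range φ ∩ ↑W = {φ a1, φ a2}}.ncard : ℝ) ≤
        2 * p ^ s * (n : ℝ) ^ (Fintype.card VF - 2) * (W.card : ℝ) ^ 2) := hG.2
  intro E0 hE0 hcard
  by_contra hnot
  push_neg at hnot
  apply hG2
  refine ⟨E0, hE0, hcard, ?_⟩
  rw [bridge F a1 a2 W G E0]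
  calc (((Finset.univ.filter (fun φ : VF → Fin n =>
        Function.Injective φ ∧ Set.range φ ∩ ↑W = {φ a1, φ a2})).filter
      (fun φ => F.edgeFinset.image (Sym2.map φ) ⊆ G \ E0)).card : ℝ)
      ≤ 2*μ := hnot
    _ = 2 * p ^ s * (n : ℝ) ^ (Fintype.card VF - 2) * (W.card : ℝ) ^ 2 := by
        rw [hμdef]; ring
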